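/- Let m be even, q ≥ 2, and t ≥ q^m - q^{m/2}. Then every α ∈ {0,…,q-1}^m with Π_{i=1}^m (α_i + 1) < q^m - t satisfies Π_{i=1}^m (q - α_i) ≥ q^m - t; consequently the dual of the hyperbolic code Hyp(t,m) is contained in Hyp(t,m). -/

import Mathlib

/-- The hyperbolic code `Hyp(t,m)` over a finite field `F` with `q` elements. -/
def hypCode (F : Type*) [Field F] [Fintype F] (m t : ℕ) :
    Submodule F ((Fin m → F) → F) :=
  Submodule.span F {v | ∃ α : Fin m → ℕ, (∀ i, α i ≤ Fintype.card F - 1) ∧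
    Fintype.card F ^ m - t ≤ ∏ i, (Fintype.card F - α i) ∧
    v = fun P => ∏ i, P i ^ α i}

/-- The Euclidean dual of a set of vectors. -/
def dualSet {F : Type*} [CommRing F] {ι : Type*} [Fintype ι] (S : Set (ι → F)) :
    Set (ι → F) :=
  {v | ∀ c ∈ S, ∑ j, c j * v j = 0}

/-- Character-type sum over a finite field. -/
lemma auxSumPow {F : Type*} [Field F] [Fintype F] {k : ℕ} (hk : k ≠ 0) :
    ∑ x : F, x ^ k = if Fintype.card F - 1 ∣ k then (-1 : F) else 0 := by
  classical
  let φ : Fˣ ↪ F := ⟨fun x ↦ x, fun _ _ h => Units.ext h⟩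
  have huniv : (Finset.univ.map φ) = Finset.univ \ {(0 : F)} := by
    ext x
    simp only [Finset.mem_map, Finset.mem_univ, Function.Embedding.coeFn_mk, true_and,
      Finset.mem_sdiff, Finset.mem_singleton, φ]
    exact (isUnit_iff_ne_zero (a := x) : (∃ a : Fˣ, (a : F) = x) ↔ x ≠ 0)
  calc
    ∑ x : F, x ^ k = ∑ x ∈ Finset.univ \ {(0 : F)}, x ^ k := by
      rw [← Finset.sum_sdiff (({0} : Finset F).subset_univ), Finset.sum_singleton,
        zero_pow hk, add_zero]
    _ = ∑ x : Fˣ, ((x : F)) ^ k := by rw [← huniv, Finset.sum_map]; rfl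
    _ = _ := by
      rw [← FiniteField.sum_pow_units F k]

/-- The sum of `x ^ 0` over a finite field vanishes. -/
lemma auxSumPowZero {F : Type*} [Field F] [Fintype F] :
    ∑ x : F, x ^ (0 : ℕ) = 0 := by
  simp [FiniteField.cast_card_eq_zero]

/-- Orthogonality pairing of two monomial evaluation vectors. -/
lemma auxPairing {F : Type*} [Field F] [Fintype F] {m : ℕ} (α γ : Fin m → ℕ) :
    ∑ P : Fin m → F, (∏ i, P i ^ α i) * ∏ i, P i ^ γ i
      = ∏ i, ∑ x : F, x ^ (α i + γ i) := by
  classical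
  rw [Fintype.prod_sum (fun i (x : F) => x ^ (α i + γ i))]
  refine Finset.sum_congr rfl fun P _ => ?_
  rw [← Finset.prod_mul_distrib]
  exact Finset.prod_congr rfl fun i _ => (pow_add _ _ _).symm

/-- The purely combinatorial statement. -/
lemma auxComb {q m t : ℕ} (hq : 1 ≤ q) (hm : Even m) (ht : q ^ m - q ^ (m / 2) ≤ t)
    (α : Fin m → ℕ) (hα : ∀ i, α i ≤ q - 1) (h : ∏ i, (α i + 1) < q ^ m - t) :
    q ^ m - t ≤ ∏ i, (q - α i) := by
  by_contra h2
  push_neg at h2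
  have hhalf : q ^ (m / 2) ≤ q ^ m := Nat.pow_le_pow_right hq (Nat.div_le_self _ _)
  have hs : q ^ m - t ≤ q ^ (m / 2) := by omega
  have key : q ^ m ≤ (∏ i, (α i + 1)) * ∏ i, (q - α i) := by
    rw [← Finset.prod_mul_distrib]
    calc q ^ m = ∏ _i : Fin m, q := by simp
      _ ≤ _ := by
        refine Finset.prod_le_prod' fun i _ => ?_
        have h1 := hα i
        have hb : 1 ≤ q - α i := by omega
        have : α i * (q - α i) + (q - α i) ≥ α i + (q - α i) := by
          have := Nat.le_mul_of_pos_right (α i) hb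
          omega
        calc q = α i + (q - α i) := by omega
          _ ≤ α i * (q - α i) + (q - α i) := this
          _ = (α i + 1) * (q - α i) := by ring
  have hmul : (∏ i, (α i + 1)) * ∏ i, (q - α i) < q ^ (m / 2) * q ^ (m / 2) :=
    Nat.mul_lt_mul_of_lt_of_lt (lt_of_lt_of_le h hs) (lt_of_lt_of_le h2 hs)
  rw [← pow_add] at hmul
  have : m / 2 + m / 2 = m := by
    obtain ⟨r, rfl⟩ := hm
    omega
  rw [this] at hmul
  omega

theorem stmt13 {F : Type*} [Field F] [Fintype F] {m t : ℕ} (hm : Even m)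
    (ht : Fintype.card F ^ m - Fintype.card F ^ (m / 2) ≤ t)
    (ht' : t ≤ Fintype.card F ^ m) :
    (∀ α : Fin m → ℕ, (∀ i, α i ≤ Fintype.card F - 1) →
      ∏ i, (α i + 1) < Fintype.card F ^ m - t →
      Fintype.card F ^ m - t ≤ ∏ i, (Fintype.card F - α i)) ∧
    dualSet (hypCode F m t : Set ((Fin m → F) → F)) ⊆
      (hypCode F m t : Set ((Fin m → F) → F)) := by
  classical
  have hq2 : 2 ≤ Fintype.card F := Fintype.one_lt_card
  set q := Fintype.card F with hqdef
  have hq1 : 1 ≤ q := by omega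
  refine ⟨fun α hα h => auxComb hq1 hm ht α hα h, ?_⟩
  intro v hv
  -- represent v by a reduced polynomial
  have hvmem : v ∈ Submodule.map (MvPolynomial.evalₗ F (Fin m))
      (MvPolynomial.restrictDegree (Fin m) F (q - 1)) := by
    rw [MvPolynomial.map_restrict_dom_evalₗ]
    trivial
  obtain ⟨p, hp, hpv⟩ := hvmem
  rw [SetLike.mem_coe, MvPolynomial.mem_restrictDegree] at hp
  -- Main claim: coefficients of "large" monomials vanish
  have claim : ∀ k : ℕ, ∀ d : Fin m →₀ ℕ, d ∈ p.support →
      m * (q - 1) - (∑ i, d i) ≤ k → q ^ m - t ≤ ∏ i, (d i + 1) → False := by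
    intro k
    induction k using Nat.strong_induction_on with
    | _ k ih =>
      intro d hd hk hbig
      have hdle : ∀ i, d i ≤ q - 1 := fun i => hp d hd i
      set α : Fin m → ℕ := fun i => q - 1 - d i with hαdef
      have hαd : ∀ i, α i + d i = q - 1 := fun i => by
        have := hdle i; simp only [hαdef]; omega
      -- the generator monomial
      have hgen : (fun P : Fin m → F => ∏ i, P i ^ α i) ∈ (hypCode F m t : Set ((Fin m → F) → F)) := by
        apply Submodule.subset_span
        refine ⟨α, fun i => by simp only [hαdef]; omega, ?_, rfl⟩
        have : ∀ i, q - α i = d i + 1 := fun i => by have := hdle i; simp only [hαdef]; omega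
        exact le_of_le_of_eq hbig (Finset.prod_congr rfl fun i _ => (this i).symm)
      have horth := hv _ hgen
      -- expand
      have hexp : ∑ P : Fin m → F, (∏ i, P i ^ α i) * v P
          = ∑ γ ∈ p.support, MvPolynomial.coeff γ p * ∏ i, ∑ x : F, x ^ (α i + γ i) := by
        have hveval : ∀ P : Fin m → F,
            v P = ∑ γ ∈ p.support, MvPolynomial.coeff γ p * ∏ i, P i ^ γ i := fun P => by
          rw [← hpv]; exact MvPolynomial.eval_eq' P p
        calc ∑ P : Fin m → F, (∏ i, P i ^ α i) * v P
            = ∑ P : Fin m → F, ∑ γ ∈ p.support,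
              MvPolynomial.coeff γ p * ((∏ i, P i ^ α i) * ∏ i, P i ^ γ i) := by
              refine Finset.sum_congr rfl fun P _ => ?_
              rw [hveval P, Finset.mul_sum]
              refine Finset.sum_congr rfl fun γ _ => by ring
          _ = ∑ γ ∈ p.support, ∑ P : Fin m → F,
              MvPolynomial.coeff γ p * ((∏ i, P i ^ α i) * ∏ i, P i ^ γ i) :=
              Finset.sum_comm
          _ = _ := by
              refine Finset.sum_congr rfl fun γ _ => ?_
              rw [← Finset.mul_sum, auxPairing]
      rw [hexp] at horth
      -- all terms with γ ≠ d vanish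
      have hsingle : ∑ γ ∈ p.support, MvPolynomial.coeff γ p * ∏ i, ∑ x : F, x ^ (α i + γ i)
          = MvPolynomial.coeff d p * ∏ i, ∑ x : F, x ^ (α i + d i) := by
        refine Finset.sum_eq_single_of_mem d hd fun γ hγ hne => ?_
        by_contra hterm
        have hK : (∏ i, ∑ x : F, x ^ (α i + γ i)) ≠ 0 := fun h0 => hterm (by rw [h0, mul_zero])
        rw [Finset.prod_ne_zero_iff] at hK
        have hγle : ∀ i, γ i ≤ q - 1 := fun i => hp γ hγ i
        -- for each i : γ i = d i, or d i = 0 ∧ γ i = q - 1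
        have hcases : ∀ i, γ i = d i ∨ (d i = 0 ∧ γ i = q - 1) := by
          intro i
          have hKi := hK i (Finset.mem_univ i)
          have hk0 : α i + γ i ≠ 0 := by
            intro h0
            apply hKi
            rw [h0]; exact auxSumPowZero
          have hdvd : q - 1 ∣ α i + γ i := by
            by_contra hnd
            apply hKi
            rw [auxSumPow hk0, if_neg hnd]
          obtain ⟨c, hc⟩ := hdvd
          have hle2 : α i + γ i ≤ 2 * (q - 1) := by
            have h1 := hγle i
            have : α i ≤ q - 1 := by simp only [hαdef]; omega
            omega
          have hαi := hαd i
          match c with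
          | 0 => omega
          | 1 =>
            left
            omega
          | 2 =>
            right
            have h1 := hγle i
            have : α i ≤ q - 1 := by simp only [hαdef]; omega
            omega
          | (c + 3) =>
            exfalso
            have : (q - 1) * 3 ≤ (q - 1) * (c + 3) := Nat.mul_le_mul_left _ (by omega)
            omega
        have hge : ∀ i, d i ≤ γ i := by
          intro i
          rcases hcases i with h | h
          · omega
          · omega
        have hnefun : ∃ i, d i ≠ γ i := by
          by_contra hall
          push_neg at hall
          exact hne (Finsupp.ext fun i => (hall i).symm)
        obtain ⟨i₀, hi₀⟩ := hnefun
        have hlt : ∑ i, d i < ∑ i, γ i := by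
          refine Finset.sum_lt_sum (fun i _ => hge i) ⟨i₀, Finset.mem_univ i₀, ?_⟩
          have := hge i₀; omega
        have hγsum : ∑ i, γ i ≤ m * (q - 1) := by
          calc ∑ i, γ i ≤ ∑ _i : Fin m, (q - 1) := Finset.sum_le_sum fun i _ => hγle i
            _ = m * (q - 1) := by simp [Finset.sum_const, mul_comm]
        have hγbig : q ^ m - t ≤ ∏ i, (γ i + 1) := by
          refine le_trans hbig (Finset.prod_le_prod' fun i _ => ?_)
          have := hge i; omega
        exact ih (m * (q - 1) - ∑ i, γ i) (by omega) γ hγ le_rfl hγbig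
      rw [hsingle] at horth
      -- compute the diagonal coefficient
      have hdiag : (∏ i, ∑ x : F, x ^ (α i + d i)) = (-1 : F) ^ m := by
        calc ∏ i, ∑ x : F, x ^ (α i + d i) = ∏ _i : Fin m, (-1 : F) := by
              refine Finset.prod_congr rfl fun i _ => ?_
              rw [hαd i, auxSumPow (by omega), if_pos dvd_rfl]
          _ = (-1 : F) ^ m := by simp
      rw [hdiag] at horth
      have : MvPolynomial.coeff d p = 0 := by
        have hne : ((-1 : F) ^ m) ≠ 0 := pow_ne_zero _ (neg_ne_zero.mpr one_ne_zero)
        exact (mul_eq_zero.mp horth).resolve_right hne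
      exact (MvPolynomial.mem_support_iff.mp hd) this
  -- every monomial in the support is "small", hence a generator of the code
  have hsupp : ∀ d ∈ p.support, ∏ i, ((d : Fin m →₀ ℕ) i + 1) < q ^ m - t := by
    intro d hd
    by_contra hge
    push_neg at hge
    exact claim (m * (q - 1) - ∑ i, d i) d hd le_rfl hge
  -- conclude
  have hvsum : v = ∑ d ∈ p.support, MvPolynomial.coeff d p •
      (fun P : Fin m → F => ∏ i, P i ^ (d : Fin m →₀ ℕ) i) := by
    funext P
    rw [← hpv]
    simp only [MvPolynomial.evalₗ_apply, Finset.sum_apply, Pi.smul_apply, smul_eq_mul]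
    exact MvPolynomial.eval_eq' P p
  rw [hvsum]
  refine Submodule.sum_mem _ fun d hd => Submodule.smul_mem _ _ ?_
  apply Submodule.subset_span
  exact ⟨fun i => d i, fun i => hp d hd i,
    auxComb hq1 hm ht _ (fun i => hp d hd i) (hsupp d hd), rfl⟩
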